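/- Let u : ℝ² → ℝ be six times continuously differentiable (e.g. C⁶ on a neighborhood of a fixed point (x,y), or C^∞). Define for h ≠ 0 Kumar's isotropic second-derivative stencil D_{II}(h) = (1/h²) [ (1/12)(u(x+h,y+h) − 2u(x,y+h) + u(x−h,y+h)) + (10/12)(u(x+h,y) − 2u(x,y) + u(x−h,y)) + (1/12)(u(x+h,y−h) − 2u(x,y−h) + u(x−h,y−h)) ]. Then as h → 0, D_{II}(h) = ∂_{xx} u(x,y) + (h²/12) Δ(∂_{xx} u)(x,y) + O(h⁴), where Δ(∂_{xx} u) = ∂_{xxxx} u + ∂_{xxyy} u; i.e., the leading-order error term involves only the Laplacian of ∂_{xx} u and is therefore directionally independent (isotropic). -/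

import Mathlib

open Asymptotics Filter Topology Real

namespace KumarAux

noncomputable def Dp (v : ℝ × ℝ) (G : ℝ × ℝ → ℝ) : ℝ × ℝ → ℝ := fun q => fderiv ℝ G q v

noncomputable def DX := Dp ((1:ℝ), (0:ℝ))
noncomputable def DY := Dp ((0:ℝ), (1:ℝ))

lemma Dp_contDiff {G : ℝ × ℝ → ℝ} {m : ℕ} (hG : ContDiff ℝ ((m:ℕ) + 1 : ℕ) G) (v : ℝ × ℝ) :
    ContDiff ℝ (m : ℕ) (Dp v G) := by
  have h1 : ContDiff ℝ (m : ℕ) (fderiv ℝ G) := hG.fderiv_right (by exact_mod_cast le_refl _)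
  exact (ContinuousLinearMap.apply ℝ ℝ v).contDiff.comp h1

lemma curve_hasDerivAt {G : ℝ × ℝ → ℝ} (hG : Differentiable ℝ G) (p v : ℝ × ℝ) (t : ℝ) :
    HasDerivAt (fun h : ℝ => G (p + h • v)) (Dp v G (p + t • v)) t := by
  have h1 : HasDerivAt (fun h : ℝ => p + h • v) v t := by
    simpa using ((hasDerivAt_id t).smul_const v).const_add p
  exact (hG _).hasFDerivAt.comp_hasDerivAt t h1

lemma Dp_pair (a b : ℝ) (G : ℝ × ℝ → ℝ) (q : ℝ × ℝ) :
    Dp (a, b) G q = a * DX G q + b * DY G q := by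
  have hv : ((a, b) : ℝ × ℝ) = a • ((1:ℝ), (0:ℝ)) + b • ((0:ℝ), (1:ℝ)) := by
    simp [Prod.ext_iff]
  simp only [Dp, DX, DY, hv, map_add, map_smul, smul_eq_mul]

lemma Dp_lin2 {G H : ℝ × ℝ → ℝ} (hG : Differentiable ℝ G) (hH : Differentiable ℝ H)
    (a b : ℝ) (v : ℝ × ℝ) :
    Dp v (fun q => a * G q + b * H q) = fun q => a * Dp v G q + b * Dp v H q := by
  funext q
  have h : HasFDerivAt (fun q => a * G q + b * H q)
      (a • fderiv ℝ G q + b • fderiv ℝ H q) q :=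
    ((hG q).hasFDerivAt.const_mul a).add ((hH q).hasFDerivAt.const_mul b)
  simp [Dp, h.fderiv, smul_eq_mul]

lemma Dp_lin4 {G1 G2 G3 G4 : ℝ × ℝ → ℝ} (h1 : Differentiable ℝ G1) (h2 : Differentiable ℝ G2)
    (h3 : Differentiable ℝ G3) (h4 : Differentiable ℝ G4) (c1 c2 c3 c4 : ℝ) (v : ℝ × ℝ) :
    Dp v (fun q => c1 * G1 q + c2 * G2 q + c3 * G3 q + c4 * G4 q)
      = fun q => c1 * Dp v G1 q + c2 * Dp v G2 q + c3 * Dp v G3 q + c4 * Dp v G4 q := by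
  funext q
  have h : HasFDerivAt (fun q => c1 * G1 q + c2 * G2 q + c3 * G3 q + c4 * G4 q)
      (c1 • fderiv ℝ G1 q + c2 • fderiv ℝ G2 q + c3 • fderiv ℝ G3 q + c4 • fderiv ℝ G4 q) q :=
    ((((h1 q).hasFDerivAt.const_mul c1).add ((h2 q).hasFDerivAt.const_mul c2)).add
      ((h3 q).hasFDerivAt.const_mul c3)).add ((h4 q).hasFDerivAt.const_mul c4)
  simp [Dp, h.fderiv, smul_eq_mul]

lemma Dp_lin3 {G1 G2 G3 : ℝ × ℝ → ℝ} (h1 : Differentiable ℝ G1) (h2 : Differentiable ℝ G2)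
    (h3 : Differentiable ℝ G3) (c1 c2 c3 : ℝ) (v : ℝ × ℝ) :
    Dp v (fun q => c1 * G1 q + c2 * G2 q + c3 * G3 q)
      = fun q => c1 * Dp v G1 q + c2 * Dp v G2 q + c3 * Dp v G3 q := by
  funext q
  have h : HasFDerivAt (fun q => c1 * G1 q + c2 * G2 q + c3 * G3 q)
      (c1 • fderiv ℝ G1 q + c2 • fderiv ℝ G2 q + c3 • fderiv ℝ G3 q) q :=
    (((h1 q).hasFDerivAt.const_mul c1).add ((h2 q).hasFDerivAt.const_mul c2)).add
      ((h3 q).hasFDerivAt.const_mul c3)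
  simp [Dp, h.fderiv, smul_eq_mul]

lemma Dp_Dp {G : ℝ × ℝ → ℝ} (hG : ContDiff ℝ 2 G) (v w q : ℝ × ℝ) :
    Dp v (Dp w G) q = fderiv ℝ (fderiv ℝ G) q v w := by
  have hd : Differentiable ℝ (fderiv ℝ G) :=
    (hG.fderiv_right (m := 1) (by norm_num)).differentiable (by norm_num)
  have h2 : HasFDerivAt (fun r => fderiv ℝ G r w)
      ((ContinuousLinearMap.apply ℝ ℝ w).comp (fderiv ℝ (fderiv ℝ G) q)) q :=
    (ContinuousLinearMap.apply ℝ ℝ w).hasFDerivAt.comp q (hd q).hasFDerivAt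
  have : Dp w G = fun r => fderiv ℝ G r w := rfl
  rw [Dp, this, h2.fderiv]
  rfl

lemma comm_XY {G : ℝ × ℝ → ℝ} (hG : ContDiff ℝ 2 G) :
    DX (DY G) = DY (DX G) := by
  funext q
  rw [DX, DY, Dp_Dp hG, Dp_Dp hG]
  exact (hG.contDiffAt.isSymmSndFDerivAt (by norm_num)).eq _ _

noncomputable def iterD (v : ℝ × ℝ) : ℕ → (ℝ × ℝ → ℝ) → ℝ × ℝ → ℝ
  | 0, G => G
  | (k+1), G => Dp v (iterD v k G)

lemma iterD_contDiff {G : ℝ × ℝ → ℝ} {m : ℕ} (v : ℝ × ℝ) :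
    ∀ (k : ℕ), ContDiff ℝ ((m + k : ℕ)) G → ContDiff ℝ (m : ℕ) (iterD v k G)
  | 0, hG => hG
  | (k+1), hG => by
      have : ContDiff ℝ ((m + 1 + k : ℕ)) G := by convert hG using 2; omega
      have h1 : ContDiff ℝ ((m+1 : ℕ)) (iterD v k G) := iterD_contDiff v k this
      exact Dp_contDiff h1 v

-- helper casts
lemma cd_two {G : ℝ × ℝ → ℝ} (h : ContDiff ℝ ((2:ℕ)) G) : ContDiff ℝ 2 G := by
  exact_mod_cast h

lemma pow1 {G : ℝ × ℝ → ℝ} (a b : ℝ) :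
    iterD (a, b) 1 G = fun q => a * DX G q + b * DY G q := by
  funext q; exact Dp_pair a b G q

lemma pow2 {G : ℝ × ℝ → ℝ} (hG : ContDiff ℝ ((2:ℕ)) G) (a b : ℝ) :
    iterD (a, b) 2 G = fun q =>
      a^2 * DX (DX G) q + (2*a*b) * DY (DX G) q + b^2 * DY (DY G) q := by
  have hX : Differentiable ℝ (DX G) :=
    (Dp_contDiff (m := 1) (by exact_mod_cast hG) _).differentiable (by norm_num)
  have hY : Differentiable ℝ (DY G) :=
    (Dp_contDiff (m := 1) (by exact_mod_cast hG) _).differentiable (by norm_num)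
  have e1 : iterD (a,b) 2 G = Dp (a,b) (fun q => a * DX G q + b * DY G q) := by
    show Dp (a,b) (iterD (a,b) 1 G) = _
    rw [pow1]
  rw [e1, Dp_lin2 hX hY]
  funext q
  simp only [Dp_pair]
  have hc : DX (DY G) = DY (DX G) := comm_XY (cd_two hG)
  rw [hc]; ring

lemma pow3 {G : ℝ × ℝ → ℝ} (hG : ContDiff ℝ ((3:ℕ)) G) (a b : ℝ) :
    iterD (a, b) 3 G = fun q =>
      a^3 * DX (DX (DX G)) q + (3*a^2*b) * DY (DX (DX G)) q
        + (3*a*b^2) * DY (DY (DX G)) q + b^3 * DY (DY (DY G)) q := by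
  have hXc : ContDiff ℝ ((2:ℕ)) (DX G) := Dp_contDiff (m := 2) (by exact_mod_cast hG) _
  have hYc : ContDiff ℝ ((2:ℕ)) (DY G) := Dp_contDiff (m := 2) (by exact_mod_cast hG) _
  have hXX : Differentiable ℝ (DX (DX G)) :=
    (Dp_contDiff (m := 1) (by exact_mod_cast hXc) _).differentiable (by norm_num)
  have hYX : Differentiable ℝ (DY (DX G)) :=
    (Dp_contDiff (m := 1) (by exact_mod_cast hXc) _).differentiable (by norm_num)
  have hYY : Differentiable ℝ (DY (DY G)) :=
    (Dp_contDiff (m := 1) (by exact_mod_cast hYc) _).differentiable (by norm_num)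
  have e1 : iterD (a,b) 3 G = Dp (a,b) (fun q =>
      a^2 * DX (DX G) q + (2*a*b) * DY (DX G) q + b^2 * DY (DY G) q) := by
    show Dp (a,b) (iterD (a,b) 2 G) = _
    rw [pow2 (by exact_mod_cast hG.of_le (by norm_cast))]
  rw [e1, Dp_lin3 hXX hYX hYY]
  funext q
  simp only [Dp_pair]
  have c1 : DX (DY (DX G)) = DY (DX (DX G)) := comm_XY (cd_two hXc)
  have c2 : DX (DY (DY G)) = DY (DX (DY G)) := comm_XY (cd_two hYc)
  have c3 : DX (DY G) = DY (DX G) := comm_XY (cd_two (by exact_mod_cast hG.of_le (by norm_cast)))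
  rw [c1, c2, c3]; ring

lemma pow4 {G : ℝ × ℝ → ℝ} (hG : ContDiff ℝ ((4:ℕ)) G) (a b : ℝ) :
    iterD (a, b) 4 G = fun q =>
      a^4 * DX (DX (DX (DX G))) q + (4*a^3*b) * DY (DX (DX (DX G))) q
        + (6*a^2*b^2) * DY (DY (DX (DX G))) q + (4*a*b^3) * DY (DY (DY (DX G))) q
        + b^4 * DY (DY (DY (DY G))) q := by
  have hXc : ContDiff ℝ ((3:ℕ)) (DX G) := Dp_contDiff (m := 3) (by exact_mod_cast hG) _
  have hYc : ContDiff ℝ ((3:ℕ)) (DY G) := Dp_contDiff (m := 3) (by exact_mod_cast hG) _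
  have hXXc : ContDiff ℝ ((2:ℕ)) (DX (DX G)) := Dp_contDiff (m := 2) (by exact_mod_cast hXc) _
  have hYXc : ContDiff ℝ ((2:ℕ)) (DY (DX G)) := Dp_contDiff (m := 2) (by exact_mod_cast hXc) _
  have hYYc : ContDiff ℝ ((2:ℕ)) (DY (DY G)) := Dp_contDiff (m := 2) (by exact_mod_cast hYc) _
  have hXXX : Differentiable ℝ (DX (DX (DX G))) :=
    (Dp_contDiff (m := 1) (by exact_mod_cast hXXc) _).differentiable (by norm_num)
  have hYXX : Differentiable ℝ (DY (DX (DX G))) :=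
    (Dp_contDiff (m := 1) (by exact_mod_cast hXXc) _).differentiable (by norm_num)
  have hYYX : Differentiable ℝ (DY (DY (DX G))) :=
    (Dp_contDiff (m := 1) (by exact_mod_cast hYXc) _).differentiable (by norm_num)
  have hYYY : Differentiable ℝ (DY (DY (DY G))) :=
    (Dp_contDiff (m := 1) (by exact_mod_cast hYYc) _).differentiable (by norm_num)
  have e1 : iterD (a,b) 4 G = Dp (a,b) (fun q =>
      a^3 * DX (DX (DX G)) q + (3*a^2*b) * DY (DX (DX G)) q
        + (3*a*b^2) * DY (DY (DX G)) q + b^3 * DY (DY (DY G)) q) := by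
    show Dp (a,b) (iterD (a,b) 3 G) = _
    rw [pow3 (by exact_mod_cast hG.of_le (by norm_cast))]
  rw [e1, Dp_lin4 hXXX hYXX hYYX hYYY]
  funext q
  simp only [Dp_pair]
  have cG : DX (DY G) = DY (DX G) :=
    comm_XY (cd_two (by exact_mod_cast hG.of_le (by norm_cast)))
  have cXG : DX (DY (DX G)) = DY (DX (DX G)) :=
    comm_XY (cd_two (by exact_mod_cast hXc.of_le (by norm_cast)))
  have cYG : DX (DY (DY G)) = DY (DX (DY G)) :=
    comm_XY (cd_two (by exact_mod_cast hYc.of_le (by norm_cast)))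
  have cXXG : DX (DY (DX (DX G))) = DY (DX (DX (DX G))) := comm_XY (cd_two hXXc)
  have cYXG : DX (DY (DY (DX G))) = DY (DX (DY (DX G))) := comm_XY (cd_two hYXc)
  have cYYG : DX (DY (DY (DY G))) = DY (DX (DY (DY G))) := comm_XY (cd_two hYYc)
  simp only [cXXG, cYXG, cYYG, cXG, cYG, cG]
  ring
lemma isBigO_step {f : ℝ → ℝ} {k : ℕ} (hf : Differentiable ℝ f) (h0 : f 0 = 0)
    (hd : deriv f =O[𝓝 (0:ℝ)] fun h => h ^ k) : f =O[𝓝 (0:ℝ)] fun h => h ^ (k+1) := by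
  rcases hd.exists_nonneg with ⟨C, hC0, hC⟩
  rw [isBigOWith_iff, Metric.eventually_nhds_iff] at hC
  obtain ⟨δ, hδ, hbound⟩ := hC
  rw [isBigO_iff]
  refine ⟨C, ?_⟩
  rw [Metric.eventually_nhds_iff]
  refine ⟨δ, hδ, fun {h} hh => ?_⟩
  have hh' : |h| < δ := by simpa [Real.dist_eq] using hh
  have key : ‖f h - f 0‖ ≤ C * |h| ^ k * ‖h - 0‖ := by
    refine Convex.norm_image_sub_le_of_norm_deriv_le (s := Metric.closedBall (0:ℝ) |h|)
      (fun t _ => hf t) (fun t ht => ?_) (convex_closedBall _ _) ?_ ?_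
    · have ht' : |t| ≤ |h| := by simpa [Real.dist_eq] using ht
      have h1 : ‖deriv f t‖ ≤ C * ‖t ^ k‖ :=
        hbound (by simpa [Real.dist_eq] using lt_of_le_of_lt ht' hh')
      refine h1.trans ?_
      have : ‖t ^ k‖ ≤ |h| ^ k := by
        rw [norm_pow, Real.norm_eq_abs]
        exact pow_le_pow_left₀ (abs_nonneg t) ht' k
      nlinarith [this]
    · simp [abs_nonneg]
    · simp [Real.dist_eq]
  rw [h0, sub_zero, sub_zero] at key
  calc ‖f h‖ ≤ C * |h| ^ k * ‖h‖ := key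
    _ = C * ‖h ^ (k+1)‖ := by
        rw [Real.norm_eq_abs, Real.norm_eq_abs, abs_pow, pow_succ]; ring

lemma odd_at_zero {g : ℝ → ℝ} (hg : ∀ t, g (-t) = -g t) : g 0 = 0 := by
  have := hg 0; simp at this; linarith

lemma even_deriv_odd {f : ℝ → ℝ} (hf : ∀ t, f (-t) = f t) :
    ∀ t, deriv f (-t) = -deriv f t := by
  intro t
  have h1 : (fun s => f (-s)) = f := funext hf
  have h2 := deriv_comp_neg (f := f) (x := t)
  rw [h1] at h2
  linarith
lemma odd_deriv_even {f : ℝ → ℝ} (hf : ∀ t, f (-t) = -f t) :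
    ∀ t, deriv f (-t) = deriv f t := by
  intro t
  have h1 : (fun s => f (-s)) = fun s => -f s := funext hf
  have h2 := deriv_comp_neg (f := f) (x := t)
  rw [h1] at h2
  rw [deriv.fun_neg] at h2
  linarith

lemma taylor6 {f : ℝ → ℝ} (hf : ContDiff ℝ ((6:ℕ)) f)
    (hz : ∀ k, k ≤ 5 → (deriv^[k] f) 0 = 0) :
    f =O[𝓝 (0:ℝ)] fun h => h ^ 6 := by
  have hCk : ∀ k : ℕ, k ≤ 5 → ContDiff ℝ ((1:ℕ)) (deriv^[k] f) := by
    intro k hk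
    exact ContDiff.iterate_deriv' 1 k (hf.of_le (by exact_mod_cast (show 1 + k ≤ 6 by omega)))
  have hdiff : ∀ k : ℕ, k ≤ 5 → Differentiable ℝ (deriv^[k] f) := fun k hk =>
    (hCk k hk).differentiable (by norm_num)
  -- top level: deriv^[6] f is continuous, hence O(1)
  have h6 : (deriv^[6] f) =O[𝓝 (0:ℝ)] fun h => h ^ 0 := by
    have hcont : Continuous (deriv^[6] f) := by
      have : deriv^[6] f = deriv (deriv^[5] f) := Function.iterate_succ_apply' deriv 5 f
      rw [this]
      exact (hCk 5 (by norm_num)).continuous_deriv (le_refl _)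
    simpa using (hcont.tendsto 0).isBigO_one ℝ
  have step : ∀ k : ℕ, k ≤ 5 → ∀ j : ℕ,
      (deriv^[k+1] f) =O[𝓝 (0:ℝ)] (fun h => h ^ j) →
      (deriv^[k] f) =O[𝓝 (0:ℝ)] fun h => h ^ (j+1) := by
    intro k hk j hO
    refine isBigO_step (hdiff k hk) (hz k (by omega)) ?_
    have : deriv^[k+1] f = deriv (deriv^[k] f) := Function.iterate_succ_apply' deriv k f
    rwa [this] at hO
  have h5 := step 5 (by norm_num) 0 h6
  have h4 := step 4 (by norm_num) 1 h5
  have h3 := step 3 (by norm_num) 2 h4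
  have h2 := step 2 (by norm_num) 3 h3
  have h1 := step 1 (by norm_num) 4 h2
  have h0 := step 0 (by norm_num) 5 h1
  simpa using h0
noncomputable def KP (c1 c2 : ℝ) : ℕ → ℝ → ℝ
  | 0 => fun h => c1 * h^2 + c2 * h^4
  | 1 => fun h => 2*c1*h + 4*c2*h^3
  | 2 => fun h => 2*c1 + 12*c2*h^2
  | 3 => fun h => 24*c2*h
  | 4 => fun _ => 24*c2
  | (_+5) => fun _ => 0

lemma KP_hasDerivAt (c1 c2 : ℝ) (k : ℕ) (hk : k ≤ 3) (t : ℝ) :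
    HasDerivAt (KP c1 c2 k) (KP c1 c2 (k+1) t) t := by
  interval_cases k
  · have h := ((hasDerivAt_pow 2 t).const_mul c1).add ((hasDerivAt_pow 4 t).const_mul c2)
    convert h using 1 <;> try rfl
    (try simp [KP]); (try push_cast); (try ring)
  · have h := (hasDerivAt_id' t |>.const_mul (2*c1)).add
      ((hasDerivAt_pow 3 t).const_mul (4*c2))
    convert h using 1 <;> try rfl
    (try simp [KP]); (try push_cast); (try ring)
  · have h := (hasDerivAt_const t (2*c1)).add ((hasDerivAt_pow 2 t).const_mul (12*c2))
    convert h using 1 <;> try rfl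
    (try simp [KP]); (try push_cast); (try ring)
  · have h := hasDerivAt_id' t |>.const_mul (24*c2)
    convert h using 1 <;> try rfl
    (try simp [KP]); (try push_cast); (try ring)

noncomputable def Phi (F : ℝ × ℝ → ℝ) (p : ℝ × ℝ) (c1 c2 : ℝ) (k : ℕ) : ℝ → ℝ := fun h =>
  (1/12) * (iterD (1,1) k F (p + h • ((1:ℝ),(1:ℝ)))
      - 2 * iterD (0,1) k F (p + h • ((0:ℝ),(1:ℝ)))
      + iterD (-1,1) k F (p + h • ((-1:ℝ),(1:ℝ))))
  + (10/12) * (iterD (1,0) k F (p + h • ((1:ℝ),(0:ℝ)))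
      - 2 * iterD (0,0) k F (p + h • ((0:ℝ),(0:ℝ)))
      + iterD (-1,0) k F (p + h • ((-1:ℝ),(0:ℝ))))
  + (1/12) * (iterD (1,-1) k F (p + h • ((1:ℝ),(-1:ℝ)))
      - 2 * iterD (0,-1) k F (p + h • ((0:ℝ),(-1:ℝ)))
      + iterD (-1,-1) k F (p + h • ((-1:ℝ),(-1:ℝ))))
  - KP c1 c2 k h

lemma Phi_deriv (F : ℝ × ℝ → ℝ) (p : ℝ × ℝ) (c1 c2 : ℝ) (k : ℕ) (hk : k ≤ 3)
    (hF : ContDiff ℝ ((6:ℕ)) F) :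
    deriv (Phi F p c1 c2 k) = Phi F p c1 c2 (k+1) := by
  funext t
  have hdk : ∀ v : ℝ × ℝ, Differentiable ℝ (iterD v k F) := by
    intro v
    exact (iterD_contDiff (m := 1) v k
      (hF.of_le (by exact_mod_cast (show 1 + k ≤ 6 by omega)))).differentiable (by norm_num)
  have hc : ∀ v : ℝ × ℝ, HasDerivAt (fun h : ℝ => iterD v k F (p + h • v))
      (iterD v (k+1) F (p + t • v)) t := fun v => curve_hasDerivAt (hdk v) p v t
  exact (((((hc (1,1)).sub ((hc (0,1)).const_mul 2)).add (hc (-1,1))).const_mul (1/12)).add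
    (((((hc (1,0)).sub ((hc (0,0)).const_mul 2)).add (hc (-1,0))).const_mul (10/12))) |>.add
    ((((hc (1,-1)).sub ((hc (0,-1)).const_mul 2)).add (hc (-1,-1))).const_mul (1/12)) |>.sub
    (KP_hasDerivAt c1 c2 k hk t)).deriv

lemma sliceX {G : ℝ × ℝ → ℝ} (hG : Differentiable ℝ G) (a b : ℝ) :
    deriv (fun s => G (s, b)) a = DX G (a, b) := by
  have h := curve_hasDerivAt hG (0, b) ((1:ℝ), (0:ℝ)) a
  have e : (fun s : ℝ => G (s, b))
      = fun s : ℝ => G ((0, b) + s • ((1:ℝ), (0:ℝ))) := by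
    funext s; congr 1; simp [Prod.ext_iff]
  rw [e, h.deriv]
  show Dp ((1:ℝ),(0:ℝ)) G _ = _
  congr 1; simp [Prod.ext_iff]

lemma sliceY {G : ℝ × ℝ → ℝ} (hG : Differentiable ℝ G) (a b : ℝ) :
    deriv (fun t => G (a, t)) b = DY G (a, b) := by
  have h := curve_hasDerivAt hG (a, 0) ((0:ℝ), (1:ℝ)) b
  have e : (fun t : ℝ => G (a, t))
      = fun t : ℝ => G ((a, 0) + t • ((0:ℝ), (1:ℝ))) := by
    funext s; congr 1; simp [Prod.ext_iff]
  rw [e, h.deriv]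
  show Dp ((0:ℝ),(1:ℝ)) G _ = _
  congr 1; simp [Prod.ext_iff]

end KumarAux


open KumarAux

/-- Kumar's isotropic second-derivative stencil satisfies
`D_{II}(h) = ∂_{xx} u + (h²/12)(∂_{xxxx}u + ∂_{xxyy}u) + O(h⁴)` as `h → 0`: the leading
error term is `(h²/12) Δ(∂_{xx} u)`, a function of the Laplacian only, hence isotropic. -/
theorem kumar_isotropic_second_derivative
    (u : ℝ → ℝ → ℝ) (hu : ContDiff ℝ 6 (Function.uncurry u)) (x y : ℝ)
    (pxx pxxxx pxxyy : ℝ)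
    (hpxx : pxx = deriv (fun s => deriv (fun s' => u s' y) s) x)
    (hpxxxx : pxxxx = deriv (fun s => deriv (fun s' => deriv (fun s'' =>
        deriv (fun s''' => u s''' y) s'') s') s) x)
    (hpxxyy : pxxyy = deriv (fun t => deriv (fun t' =>
        deriv (fun s => deriv (fun s' => u s' t') s) x) t) y) :
    (fun h : ℝ =>
        (1 / h ^ 2) *
            ((1/12) * (u (x+h) (y+h) - 2 * u x (y+h) + u (x-h) (y+h))
              + (10/12) * (u (x+h) y - 2 * u x y + u (x-h) y)
              + (1/12) * (u (x+h) (y-h) - 2 * u x (y-h) + u (x-h) (y-h)))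
          - (pxx + (h ^ 2 / 12) * (pxxxx + pxxyy)))
      =O[𝓝[≠] (0:ℝ)] (fun h : ℝ => h ^ 4) := by
  have hF6 : ContDiff ℝ ((6:ℕ)) (Function.uncurry u) := by exact_mod_cast hu
  set F : ℝ × ℝ → ℝ := Function.uncurry u with hFdef
  set p : ℝ × ℝ := (x, y) with hpdef
  -- smoothness ladder
  have hF5 : ContDiff ℝ ((5:ℕ)) (DX F) := Dp_contDiff (m := 5) (by exact_mod_cast hF6) _
  have hXX : ContDiff ℝ ((4:ℕ)) (DX (DX F)) := Dp_contDiff (m := 4) (by exact_mod_cast hF5) _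
  have hXXX : ContDiff ℝ ((3:ℕ)) (DX (DX (DX F))) := Dp_contDiff (m := 3) (by exact_mod_cast hXX) _
  have hYXX : ContDiff ℝ ((3:ℕ)) (DY (DX (DX F))) := Dp_contDiff (m := 3) (by exact_mod_cast hXX) _
  have hFd : Differentiable ℝ F := hF6.differentiable (by norm_num)
  have hXd : Differentiable ℝ (DX F) := hF5.differentiable (by norm_num)
  have hXXd : Differentiable ℝ (DX (DX F)) := hXX.differentiable (by norm_num)
  have hXXXd : Differentiable ℝ (DX (DX (DX F))) := hXXX.differentiable (by norm_num)
  have hYXXd : Differentiable ℝ (DY (DX (DX F))) := hYXX.differentiable (by norm_num)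
  -- translation of hypotheses
  have e1 : ∀ b s : ℝ, deriv (fun s' => u s' b) s = DX F (s, b) := fun b s => sliceX hFd s b
  have epxx : pxx = DX (DX F) p := by
    rw [hpxx, show (fun s => deriv (fun s' => u s' y) s) = fun s => DX F (s, y) from
      funext (e1 y)]
    exact sliceX hXd x y
  have epxxxx : pxxxx = DX (DX (DX (DX F))) p := by
    rw [hpxxxx, show (fun s'' => deriv (fun s''' => u s''' y) s'') = fun s'' => DX F (s'', y) from
      funext (e1 y)]
    rw [show (fun s' => deriv (fun s'' => DX F (s'', y)) s') = fun s' => DX (DX F) (s', y) from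
      funext (fun s' => sliceX hXd s' y)]
    rw [show (fun s => deriv (fun s' => DX (DX F) (s', y)) s)
        = fun s => DX (DX (DX F)) (s, y) from funext (fun s => sliceX hXXd s y)]
    exact sliceX hXXXd x y
  have epxxyy : pxxyy = DY (DY (DX (DX F))) p := by
    rw [hpxxyy, show (fun t' => deriv (fun s => deriv (fun s' => u s' t') s) x)
        = fun t' => DX (DX F) (x, t') from funext (fun t' => by
      rw [show (fun s => deriv (fun s' => u s' t') s) = fun s => DX F (s, t') from
        funext (e1 t')]
      exact sliceX hXd x t')]
    rw [show (fun t => deriv (fun t' => DX (DX F) (x, t')) t)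
        = fun t => DY (DX (DX F)) (x, t) from funext (fun t => sliceY hXXd x t)]
    exact sliceY hYXXd x y
  set c2 : ℝ := (pxxxx + pxxyy) / 12 with hc2
  set ψ : ℝ → ℝ := Phi F p pxx c2 0 with hψ
  -- derivative ladder
  have d0 : deriv (Phi F p pxx c2 0) = Phi F p pxx c2 1 := Phi_deriv _ _ _ _ 0 (by norm_num) hF6
  have d1 : deriv (Phi F p pxx c2 1) = Phi F p pxx c2 2 := Phi_deriv _ _ _ _ 1 (by norm_num) hF6
  have d2 : deriv (Phi F p pxx c2 2) = Phi F p pxx c2 3 := Phi_deriv _ _ _ _ 2 (by norm_num) hF6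
  have d3 : deriv (Phi F p pxx c2 3) = Phi F p pxx c2 4 := Phi_deriv _ _ _ _ 3 (by norm_num) hF6
  -- smoothness of ψ
  have hψC : ContDiff ℝ ((6:ℕ)) ψ := by
    have hcv : ∀ v : ℝ × ℝ, ContDiff ℝ ((6:ℕ)) (fun h : ℝ => F (p + h • v)) := fun v =>
      hF6.comp (contDiff_const.add (contDiff_id.smul contDiff_const))
    have hpoly : ContDiff ℝ ((6:ℕ)) (fun h : ℝ => pxx * h ^ 2 + c2 * h ^ 4) :=
      (contDiff_const.mul (contDiff_id.pow 2)).add (contDiff_const.mul (contDiff_id.pow 4))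
    rw [hψ]
    have e : Phi F p pxx c2 0 = fun h : ℝ =>
        (1/12) * (F (p + h • ((1:ℝ),(1:ℝ))) - 2 * F (p + h • ((0:ℝ),(1:ℝ)))
            + F (p + h • ((-1:ℝ),(1:ℝ))))
        + (10/12) * (F (p + h • ((1:ℝ),(0:ℝ))) - 2 * F (p + h • ((0:ℝ),(0:ℝ)))
            + F (p + h • ((-1:ℝ),(0:ℝ))))
        + (1/12) * (F (p + h • ((1:ℝ),(-1:ℝ))) - 2 * F (p + h • ((0:ℝ),(-1:ℝ)))
            + F (p + h • ((-1:ℝ),(-1:ℝ))))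
        - (pxx * h ^ 2 + c2 * h ^ 4) := rfl
    rw [e]
    exact (((contDiff_const.mul (((hcv (1,1)).sub (contDiff_const.mul (hcv (0,1)))).add
      (hcv (-1,1)))).add (contDiff_const.mul (((hcv (1,0)).sub
      (contDiff_const.mul (hcv (0,0)))).add (hcv (-1,0))))).add
      (contDiff_const.mul (((hcv (1,-1)).sub (contDiff_const.mul (hcv (0,-1)))).add
      (hcv (-1,-1))))).sub hpoly
  -- point computations
  have ept : ∀ (h a b : ℝ), p + h • ((a:ℝ), (b:ℝ)) = (x + h * a, y + h * b) := by
    intro h a b; rw [hpdef]; simp [Prod.ext_iff]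
  -- evenness of ψ
  have heven : ∀ t : ℝ, ψ (-t) = ψ t := by
    intro t
    rw [hψ]
    simp only [Phi, KP, iterD, ept]
    ring_nf
  -- values at 0
  have val0 : ψ 0 = 0 := by
    rw [hψ]; simp only [Phi, KP, iterD, ept]; ring_nf
  have it2 : deriv^[2] ψ = Phi F p pxx c2 2 := by
    show deriv (deriv ψ) = _
    rw [hψ, d0, d1]
  have it4 : deriv^[4] ψ = Phi F p pxx c2 4 := by
    show deriv (deriv (deriv (deriv ψ))) = _
    rw [hψ, d0, d1, d2, d3]
  have hF2 : ContDiff ℝ ((2:ℕ)) F := by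
    exact_mod_cast hF6.of_le (by exact_mod_cast (show (2:ℕ) ≤ 6 by norm_num))
  have hF4 : ContDiff ℝ ((4:ℕ)) F := by
    exact_mod_cast hF6.of_le (by exact_mod_cast (show (4:ℕ) ≤ 6 by norm_num))
  have val2 : deriv^[2] ψ 0 = 0 := by
    rw [it2]
    simp only [Phi, KP, pow2 hF2 1 1, pow2 hF2 0 1, pow2 hF2 (-1) 1, pow2 hF2 1 0,
      pow2 hF2 0 0, pow2 hF2 (-1) 0, pow2 hF2 1 (-1), pow2 hF2 0 (-1), pow2 hF2 (-1) (-1), zero_smul, add_zero]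
    rw [epxx]
    ring_nf
  have val4 : deriv^[4] ψ 0 = 0 := by
    rw [it4]
    simp only [Phi, KP, pow4 hF4 1 1, pow4 hF4 0 1, pow4 hF4 (-1) 1, pow4 hF4 1 0,
      pow4 hF4 0 0, pow4 hF4 (-1) 0, pow4 hF4 1 (-1), pow4 hF4 0 (-1), pow4 hF4 (-1) (-1), zero_smul, add_zero]
    rw [hc2, epxxxx, epxxyy]
    ring_nf
  -- odd values via parity
  have ho1 := even_deriv_odd heven
  have he2 := odd_deriv_even ho1
  have ho3 := even_deriv_odd he2
  have he4 := odd_deriv_even ho3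
  have ho5 := even_deriv_odd he4
  have hz : ∀ k, k ≤ 5 → deriv^[k] ψ 0 = 0 := by
    intro k hk
    interval_cases k
    · exact val0
    · exact odd_at_zero ho1
    · exact val2
    · exact odd_at_zero ho3
    · exact val4
    · exact odd_at_zero ho5
  have hO6 : ψ =O[𝓝 (0:ℝ)] fun h => h ^ 6 := taylor6 hψC hz
  -- conclude
  have hO6' : (fun h : ℝ => (1 / h ^ 2) * ψ h) =O[𝓝[≠] (0:ℝ)] fun h : ℝ => (1 / h ^ 2) * h ^ 6 :=
    (isBigO_refl (fun h : ℝ => 1 / h ^ 2) _).mul (hO6.mono nhdsWithin_le_nhds)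
  have key1 : (fun h : ℝ =>
        (1 / h ^ 2) *
            ((1/12) * (u (x+h) (y+h) - 2 * u x (y+h) + u (x-h) (y+h))
              + (10/12) * (u (x+h) y - 2 * u x y + u (x-h) y)
              + (1/12) * (u (x+h) (y-h) - 2 * u x (y-h) + u (x-h) (y-h)))
          - (pxx + (h ^ 2 / 12) * (pxxxx + pxxyy)))
      =ᶠ[𝓝[≠] (0:ℝ)] fun h : ℝ => (1 / h ^ 2) * ψ h := by
    filter_upwards [self_mem_nhdsWithin] with h hh
    have hh' : (h : ℝ) ≠ 0 := hh
    rw [hψ]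
    simp only [Phi, KP, iterD, ept, hFdef, Function.uncurry_apply_pair, hc2]
    field_simp
    ring_nf
  have key2 : (fun h : ℝ => (1 / h ^ 2) * h ^ 6) =ᶠ[𝓝[≠] (0:ℝ)] fun h : ℝ => h ^ 4 := by
    filter_upwards [self_mem_nhdsWithin] with h hh
    have hh' : (h : ℝ) ≠ 0 := hh
    field_simp
  exact hO6'.congr' key1.symm key2
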